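/- arXiv:1210.8322 — 2 statements merged into one kernel-verified Lean document; each statement's English description precedes it below -/
import Mathlib

section
/- Let Λ be a finite dimensional selfinjective algebra over an algebraically closed field K, with Nakayama functor ν = D Hom_Λ(-, Λ). For a finitely generated Λ-module X with minimal projective presentation P¹ → P⁰ → X → 0, let P_X denote the two-term complex (P¹ → P⁰) in the homotopy category K^b(proj Λ). Then X ≅ νX in mod Λ if and only if P_X ≅ ν P_X in K^b(proj Λ). -/
open CategoryTheory CategoryTheory.Limits ModuleCat

section Prelim
variable {R : Type} [Ring R]

/-- An indecomposable module. -/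
def Indec (M : ModuleCat R) : Prop :=
  Nontrivial M ∧ ∀ N₁ N₂ : Submodule R M, IsCompl N₁ N₂ → N₁ = ⊥ ∨ N₂ = ⊥

/-- `N` lies in `add M`. -/
def InAddM (M N : ModuleCat R) : Prop :=
  ∃ (n : ℕ) (s : N ⟶ ⨁ (fun _ : Fin n => M)) (p : (⨁ (fun _ : Fin n => M)) ⟶ N), s ≫ p = 𝟙 N

/-- `M` is basic with exactly `n` pairwise non-isomorphic indecomposable summands. -/
def BasicOfCard (M : ModuleCat R) (n : ℕ) : Prop :=
  ∃ f : Fin n → ModuleCat R, (∀ i, Indec (f i)) ∧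
    (∀ i j, i ≠ j → IsEmpty (f i ≅ f j)) ∧ Nonempty (M ≅ ⨁ f)

def IsBasicM (M : ModuleCat R) : Prop := ∃ n, BasicOfCard M n

/-- τ-rigid pair. -/
def TauRigidPair (τ : ModuleCat R → ModuleCat R) (X P : ModuleCat R) : Prop :=
  Projective P ∧ (∀ f : X ⟶ τ X, f = 0) ∧ (∀ f : P ⟶ X, f = 0)

/-- Basic support τ-tilting pair: τ-rigid pair with `|X| + |P| = |Λ|`. -/
def SupportTauTiltingPair (τ : ModuleCat R → ModuleCat R) (X P : ModuleCat R) : Prop :=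
  TauRigidPair τ X P ∧
  ∃ a b c : ℕ, BasicOfCard X a ∧ BasicOfCard P b ∧
    BasicOfCard (ModuleCat.of R R) c ∧ a + b = c

/-- Minimal projective presentation `P1 → P0 → X → 0`. -/
def MinProjPres (P1 P0 X : ModuleCat R) (g : P1 ⟶ P0) (f : P0 ⟶ X) : Prop :=
  Projective P1 ∧ Projective P0 ∧ Function.Surjective f ∧
  LinearMap.range g.hom = LinearMap.ker f.hom ∧
  (∀ φ : P0 ⟶ P0, φ ≫ f = f → IsIso φ) ∧ (∀ φ : P1 ⟶ P1, φ ≫ g = g → IsIso φ)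

/-- `τ` is the AR translation attached to the Nakayama functor `ν`:
`τ X = ker (ν P1 → ν P0)` for a minimal projective presentation. -/
def IsARTranslation (ν : ModuleCat R ⥤ ModuleCat R) (τ : ModuleCat R → ModuleCat R) : Prop :=
  ∀ (X P1 P0 : ModuleCat R) (g : P1 ⟶ P0) (f : P0 ⟶ X),
    MinProjPres P1 P0 X g f → Nonempty (τ X ≅ kernel (ν.map g))

/-- Minimal injective copresentation `0 → X → I0 → I1`. -/
def MinInjCopres (X I0 I1 : ModuleCat R) (i : X ⟶ I0) (d : I0 ⟶ I1) : Prop :=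
  Injective I0 ∧ Injective I1 ∧ Function.Injective i ∧
  LinearMap.range i.hom = LinearMap.ker d.hom ∧
  (∀ φ : I0 ⟶ I0, i ≫ φ = i → IsIso φ) ∧ (∀ φ : I1 ⟶ I1, d ≫ φ = d → IsIso φ)

/-- `τ⁻` is the inverse AR translation attached to `ν⁻`. -/
def IsInvARTranslation (νinv : ModuleCat R ⥤ ModuleCat R)
    (τinv : ModuleCat R → ModuleCat R) : Prop :=
  ∀ (X I0 I1 : ModuleCat R) (i : X ⟶ I0) (d : I0 ⟶ I1),
    MinInjCopres X I0 I1 i d → Nonempty (τinv X ≅ cokernel (νinv.map d))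

/-- Torsion class: closed under factor modules and extensions. -/
def IsTorsionClass (T : Set (ModuleCat R)) : Prop :=
  (∀ X ∈ T, ∀ (Y : ModuleCat R) (p : X ⟶ Y), Function.Surjective p → Y ∈ T) ∧
  (∀ (X E Z : ModuleCat R) (i : X ⟶ E) (p : E ⟶ Z), X ∈ T → Z ∈ T →
    Function.Injective i → Function.Surjective p → LinearMap.range i.hom = LinearMap.ker p.hom → E ∈ T)

def IsFunctoriallyFinite (T : Set (ModuleCat R)) : Prop :=
  (∀ M : ModuleCat R, ∃ X ∈ T, ∃ f : M ⟶ X, ∀ X' ∈ T, ∀ g : M ⟶ X', ∃ h : X ⟶ X', f ≫ h = g) ∧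
  (∀ M : ModuleCat R, ∃ X ∈ T, ∃ f : X ⟶ M, ∀ X' ∈ T, ∀ g : X' ⟶ M, ∃ h : X' ⟶ X, h ≫ f = g)

/-- `Fac X`. -/
def FacSet (X : ModuleCat R) : Set (ModuleCat R) :=
  {Y | ∃ (n : ℕ) (p : (⨁ fun _ : Fin n => X) ⟶ Y), Function.Surjective p}

/-- `X` is Ext-projective in the torsion class `T`. -/
def ExtProjectiveIn (T : Set (ModuleCat R)) (X : ModuleCat R) : Prop :=
  X ∈ T ∧ ∀ (Y E : ModuleCat R) (i : Y ⟶ E) (p : E ⟶ X), Y ∈ T →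
    Function.Injective i → Function.Surjective p → LinearMap.range i.hom = LinearMap.ker p.hom →
    ∃ s : X ⟶ E, s ≫ p = 𝟙 X

/-- `Q = P(T)`, the basic additive generator of the Ext-projectives of `T`. -/
def IsExtProjGenerator (T : Set (ModuleCat R)) (Q : ModuleCat R) : Prop :=
  IsBasicM Q ∧ ExtProjectiveIn T Q ∧ ∀ Z : ModuleCat R, (ExtProjectiveIn T Z ↔ InAddM Q Z)

end Prelim


section MyAux

variable {R : Type} [Ring R]

/-- Descend a linear map along a surjection whose kernel it kills. -/
lemma myDescend {A B C : ModuleCat R} (q : A ⟶ B) (hq : Function.Surjective q) (t : A ⟶ C)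
    (ht : LinearMap.ker q.hom ≤ LinearMap.ker t.hom) : ∃ h : B ⟶ C, q ≫ h = t := by
  let e : (A ⧸ LinearMap.ker q.hom) ≃ₗ[R] B := LinearMap.quotKerEquivOfSurjective q.hom hq
  refine ⟨ModuleCat.ofHom ((Submodule.liftQ (LinearMap.ker q.hom) t.hom ht).comp (e.symm : B →ₗ[R] _) : B →ₗ[R] C), ?_⟩
  ext a
  have h1 : e.symm (q a) = Submodule.Quotient.mk a := by
    apply e.injective
    simp only [LinearEquiv.apply_symm_apply]
    rfl
  show (Submodule.liftQ (LinearMap.ker q.hom) t.hom ht) (e.symm (q a)) = t a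
  rw [h1]
  rfl

/-- Lift a map against another map with larger range, from a projective source. -/
lemma myLift {P A B : ModuleCat R} (hP : Projective P) (g : A ⟶ B) (t : P ⟶ B)
    (ht : LinearMap.range t.hom ≤ LinearMap.range g.hom) : ∃ l : P ⟶ A, l ≫ g = t := by
  haveI := hP
  let g' : A ⟶ ModuleCat.of R (LinearMap.range g.hom) := ModuleCat.ofHom g.hom.rangeRestrict
  haveI : Epi g' := (ModuleCat.epi_iff_surjective _).2 (fun y => g.hom.surjective_rangeRestrict y)
  let t' : P ⟶ ModuleCat.of R (LinearMap.range g.hom) :=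
    ModuleCat.ofHom (LinearMap.codRestrict (LinearMap.range g.hom) t.hom (fun x => ht ⟨x, rfl⟩))
  obtain ⟨l, hl⟩ := Projective.factors t' g'
  refine ⟨l, ?_⟩
  ext p
  have h1 : g' (l p) = t' p := by
    have := congrArg (fun φ => φ p) hl
    simpa using this
  exact congrArg Subtype.val h1

lemma myIsIso {D : Type*} [Category D] {X Y : D} (u : X ⟶ Y) (v : Y ⟶ X)
    (h1 : IsIso (u ≫ v)) (h2 : IsIso (v ≫ u)) : IsIso u := by
  have hrb : u ≫ (v ≫ inv (u ≫ v)) = 𝟙 X := by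
    rw [← Category.assoc]; exact IsIso.hom_inv_id _
  have hlb : (inv (v ≫ u) ≫ v) ≫ u = 𝟙 Y := by
    rw [Category.assoc]; exact IsIso.inv_hom_id _
  have hl_eq : (inv (v ≫ u) ≫ v) = v ≫ inv (u ≫ v) := by
    conv_lhs => rw [← Category.comp_id (inv (v ≫ u) ≫ v), ← hrb]
    rw [← Category.assoc, ← Category.assoc, hlb, Category.id_comp]
  exact ⟨v ≫ inv (u ≫ v), hrb, by rw [← hl_eq]; exact hlb⟩

lemma myMapExact (ν : ModuleCat R ⥤ ModuleCat R) [ν.IsEquivalence] [ν.Additive]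
    {A B C : ModuleCat R} (g : A ⟶ B) (f : B ⟶ C) (hz : g ≫ f = 0)
    (hsurj : Function.Surjective f) (hex : LinearMap.range g.hom = LinearMap.ker f.hom) :
    Function.Surjective (ν.map f) ∧ LinearMap.range (ν.map g).hom = LinearMap.ker (ν.map f).hom := by
  let S : ShortComplex (ModuleCat R) := ShortComplex.mk g f hz
  have hS : S.Exact := S.moduleCat_exact_iff_range_eq_ker.2 hex
  have hS2 : (S.map ν).Exact := hS.map ν
  constructor
  · haveI : Epi f := (ModuleCat.epi_iff_surjective f).2 hsurj
    exact (ModuleCat.epi_iff_surjective (ν.map f)).1 inferInstance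
  · exact (S.map ν).moduleCat_exact_iff_range_eq_ker.1 hS2

end MyAux

/-- for a selfinjective algebra Λ, a f.d. module X satisfies X ≅ νX
iff its minimal projective presentation `P_X` satisfies `P_X ≅ ν P_X` in `K^b(proj Λ)`
(for minimal two-term complexes this is an isomorphism of complexes). -/
theorem statement0
    (K : Type) [Field K] [IsAlgClosed K]
    (Λ : Type) [Ring Λ] [Algebra K Λ] [FiniteDimensional K Λ]
    (hself : Module.Injective Λ Λ)
    (ν : ModuleCat Λ ⥤ ModuleCat Λ) [ν.IsEquivalence] [ν.Additive]
    (hνproj : ∀ M : ModuleCat Λ, Projective M → Projective (ν.obj M))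
    (X P1 P0 : ModuleCat Λ) [Module.Finite Λ X]
    (g : P1 ⟶ P0) (f : P0 ⟶ X) (hpres : MinProjPres P1 P0 X g f) :
    Nonempty (ν.obj X ≅ X) ↔
      ∃ (a : ν.obj P1 ≅ P1) (b : ν.obj P0 ≅ P0), ν.map g ≫ b.hom = a.hom ≫ g := by
  classical
  obtain ⟨hP1, hP0, hfsurj, hker, hminP0, hminP1⟩ := hpres
  have hgf : g ≫ f = 0 := by
    ext x
    have hx : g.hom x ∈ LinearMap.ker f.hom := hker ▸ LinearMap.mem_range_self g.hom x
    simpa using hx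
  obtain ⟨hνfsurj, hνker⟩ := myMapExact ν g f hgf hfsurj hker
  have hνgf : ν.map g ≫ ν.map f = 0 := by
    rw [← ν.map_comp, hgf, Functor.map_zero]
  haveI : Epi f := (ModuleCat.epi_iff_surjective f).2 hfsurj
  haveI : Epi (ν.map f) := (ModuleCat.epi_iff_surjective (ν.map f)).2 hνfsurj
  haveI : Projective P0 := hP0
  haveI : Projective P1 := hP1
  haveI : Projective (ν.obj P0) := hνproj P0 hP0
  haveI : Projective (ν.obj P1) := hνproj P1 hP1
  -- minimality transferred through ν
  have hminν0 : ∀ φ : ν.obj P0 ⟶ ν.obj P0, φ ≫ ν.map f = ν.map f → IsIso φ := by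
    intro φ hφ
    obtain ⟨ψ, rfl⟩ := ν.map_surjective φ
    have hψ : ψ ≫ f = f := ν.map_injective (by rw [ν.map_comp]; exact hφ)
    haveI := hminP0 ψ hψ
    infer_instance
  have hminν1 : ∀ φ : ν.obj P1 ⟶ ν.obj P1, φ ≫ ν.map g = ν.map g → IsIso φ := by
    intro φ hφ
    obtain ⟨ψ, rfl⟩ := ν.map_surjective φ
    have hψ : ψ ≫ g = g := ν.map_injective (by rw [ν.map_comp]; exact hφ)
    haveI := hminP1 ψ hψ
    infer_instance
  constructor
  · rintro ⟨e⟩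
    haveI : Epi (ν.map f ≫ e.hom) := epi_comp _ _
    obtain ⟨b0, hb0⟩ := Projective.factors (ν.map f ≫ e.hom) f
    obtain ⟨b0', hb0'⟩ := Projective.factors f (ν.map f ≫ e.hom)
    have i1 : IsIso (b0' ≫ b0) := by
      apply hminP0
      rw [Category.assoc, hb0, hb0']
    have i2 : IsIso (b0 ≫ b0') := by
      apply hminν0
      have hb0'' : b0' ≫ ν.map f = f ≫ e.inv := by
        rw [Iso.eq_comp_inv, Category.assoc]
        exact hb0' 
      rw [Category.assoc, hb0'', ← Category.assoc, hb0, Category.assoc,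
        Iso.hom_inv_id, Category.comp_id]
    haveI ib0 : IsIso b0 := myIsIso b0 b0' i2 i1
    -- now the P1 level
    have hr1 : LinearMap.range (ν.map g ≫ b0).hom ≤ LinearMap.range g.hom := by
      rw [hker]
      rintro x ⟨y, rfl⟩
      have hcomp : (ν.map g ≫ b0) ≫ f = 0 := by
        rw [Category.assoc, hb0, ← Category.assoc, ← ν.map_comp, hgf,
          Functor.map_zero, zero_comp]
      show ((ν.map g ≫ b0) ≫ f) y = 0
      rw [hcomp]
      rfl
    obtain ⟨a0, ha0⟩ := myLift (hνproj P1 hP1) g (ν.map g ≫ b0) hr1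
    have hbinv : inv b0 ≫ ν.map f = f ≫ e.inv := by
      have : ν.map f = b0 ≫ f ≫ e.inv := by
        rw [← Category.assoc, hb0, Category.assoc, Iso.hom_inv_id, Category.comp_id]
      rw [this, ← Category.assoc, IsIso.inv_hom_id, Category.id_comp]
    have hr2 : LinearMap.range (g ≫ inv b0).hom ≤ LinearMap.range (ν.map g).hom := by
      rw [hνker]
      rintro x ⟨y, rfl⟩
      have hcomp : (g ≫ inv b0) ≫ ν.map f = 0 := by
        rw [Category.assoc, hbinv, ← Category.assoc, hgf, zero_comp]
      show ((g ≫ inv b0) ≫ ν.map f) y = 0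
      rw [hcomp]
      rfl
    obtain ⟨a0', ha0'⟩ := myLift hP1 (ν.map g) (g ≫ inv b0) hr2
    have i1' : IsIso (a0' ≫ a0) := by
      apply hminP1
      rw [Category.assoc, ha0, ← Category.assoc, ha0', Category.assoc,
        IsIso.inv_hom_id, Category.comp_id]
    have i2' : IsIso (a0 ≫ a0') := by
      apply hminν1
      rw [Category.assoc, ha0', ← Category.assoc, ha0, Category.assoc,
        IsIso.hom_inv_id, Category.comp_id]
    haveI ia0 : IsIso a0 := myIsIso a0 a0' i2' i1'
    refine ⟨asIso a0, asIso b0, ?_⟩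
    show ν.map g ≫ b0 = a0 ≫ g
    exact ha0.symm
  · rintro ⟨a, b, hab⟩
    have h1 : LinearMap.ker (ν.map f).hom ≤ LinearMap.ker (b.hom ≫ f).hom := by
      rw [← hνker]
      rintro x ⟨y, rfl⟩
      have hcomp : ν.map g ≫ b.hom ≫ f = 0 := by
        rw [← Category.assoc, hab, Category.assoc, hgf, comp_zero]
      show (ν.map g ≫ b.hom ≫ f) y = 0
      rw [hcomp]
      rfl
    obtain ⟨h, hh⟩ := myDescend (ν.map f) hνfsurj (b.hom ≫ f) h1
    have hginv : g ≫ b.inv = a.inv ≫ ν.map g := by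
      rw [Iso.comp_inv_eq, Category.assoc, hab, ← Category.assoc, Iso.inv_hom_id,
        Category.id_comp]
    have h2 : LinearMap.ker f.hom ≤ LinearMap.ker (b.inv ≫ ν.map f).hom := by
      rw [← hker]
      rintro x ⟨y, rfl⟩
      have hcomp : g ≫ b.inv ≫ ν.map f = 0 := by
        rw [← Category.assoc, hginv, Category.assoc, hνgf, comp_zero]
      show (g ≫ b.inv ≫ ν.map f) y = 0
      rw [hcomp]
      rfl
    obtain ⟨h', hh'⟩ := myDescend f hfsurj (b.inv ≫ ν.map f) h2
    refine ⟨⟨h, h', ?_, ?_⟩⟩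
    · rw [← cancel_epi (ν.map f), ← Category.assoc, hh, Category.assoc, hh',
        ← Category.assoc, Iso.hom_inv_id, Category.id_comp, Category.comp_id]
    · rw [← cancel_epi f, ← Category.assoc, hh', Category.assoc, hh,
        ← Category.assoc, Iso.inv_hom_id, Category.id_comp, Category.comp_id]
end

section
/- Let C be a 2-CY triangulated category with cluster tilting object T and Λ = End_C(T). For an object M ∈ C, take a triangle T¹_M → T⁰_M → M → T¹_M[1] with T⁰_M, T¹_M ∈ add T and T⁰_M → M a minimal right (add T)-approximation, and let T_M be the complex (T¹_M → T⁰_M). Suppose Λ is selfinjective. Then M ≅ M[2] in C if and only if Hom_C(T, T_M) ≅ ν Hom_C(T, T_M) in K^b(proj Λ), where ν is the Nakayama functor of Λ. -/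
open CategoryTheory CategoryTheory.Pretriangulated CategoryTheory.Limits
section ClusterPrelim
open CategoryTheory CategoryTheory.Pretriangulated CategoryTheory.Limits

variable {C : Type} [Category C] [Preadditive C]

/-- `Y ∈ add X`. -/
def InAddC [HasFiniteBiproducts C] (X Y : C) : Prop :=
  ∃ (n : ℕ) (s : Y ⟶ ⨁ (fun _ : Fin n => X)) (p : (⨁ (fun _ : Fin n => X)) ⟶ Y), s ≫ p = 𝟙 Y

/-- `Z` is a direct summand of `M`. -/
def IsSummandC (Z M : C) : Prop := ∃ (s : Z ⟶ M) (p : M ⟶ Z), s ≫ p = 𝟙 Z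

/-- Indecomposable object. -/
def IndecC [HasZeroObject C] [HasBinaryBiproducts C] (Z : C) : Prop :=
  ¬ IsZero Z ∧ ∀ (A B : C), Nonempty (Z ≅ A ⊞ B) → IsZero A ∨ IsZero B

def BasicOfCardC [HasZeroObject C] [HasFiniteBiproducts C] [HasBinaryBiproducts C] (M : C) (n : ℕ) : Prop :=
  ∃ f : Fin n → C, (∀ i, IndecC (f i)) ∧ (∀ i j, i ≠ j → IsEmpty (f i ≅ f j)) ∧
    Nonempty (M ≅ ⨁ f)

def IsBasicC [HasZeroObject C] [HasFiniteBiproducts C] [HasBinaryBiproducts C] (M : C) : Prop :=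
  ∃ n, BasicOfCardC M n

/-- Cluster tilting object: `add T = { Y | Hom(T, Y[1]) = 0 }`. -/
def IsClusterTilting [HasFiniteBiproducts C] [HasShift C ℤ] (T : C) : Prop :=
  ∀ Y : C, InAddC T Y ↔ (∀ f : T ⟶ Y⟦(1:ℤ)⟧, f = 0)

/-- `Hom_C(T, X)` is a left module over `Λ = End(T)ᵐᵒᵖ` by precomposition. -/
instance homEndOpModule (T X : C) : Module (End T)ᵐᵒᵖ (T ⟶ X) where
  smul a f := a.unop ≫ f
  one_smul f := Category.id_comp f
  mul_smul a b f := by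
    show (a * b).unop ≫ f = a.unop ≫ (b.unop ≫ f)
    simp [End.mul_def]
  smul_zero a := Limits.comp_zero
  smul_add a f g := Preadditive.comp_add _ _ _ _ _ _
  add_smul a b f := Preadditive.add_comp _ _ _ _ _ _
  zero_smul f := Limits.zero_comp

/-- `X̄ = Hom_C(T, X)` as a module over `Λ = End(T)ᵐᵒᵖ`. -/
def Mbar (T X : C) : ModuleCat (End T)ᵐᵒᵖ := ModuleCat.of (End T)ᵐᵒᵖ (T ⟶ X)

/-- Functoriality of `X̄` in `X`. -/
def MbarMap (T : C) {X Y : C} (h : X ⟶ Y) : Mbar T X ⟶ Mbar T Y :=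
  ModuleCat.ofHom
  { toFun := fun f => f ≫ h
    map_add' := fun f g => Preadditive.add_comp _ _ _ _ _ _
    map_smul' := fun a f => by
      show (a.unop ≫ f) ≫ h = a.unop ≫ (f ≫ h)
      simp }

end ClusterPrelim

section MyAux

variable {C : Type} [Category C] [Preadditive C] [HasFiniteBiproducts C]

set_option linter.unusedSectionVars false

lemma myMbarMap_apply (T : C) {X Y : C} (h : X ⟶ Y) (f : T ⟶ X) :
    MbarMap T h f = f ≫ h := rfl

lemma myMbar_natural {T Z Y : C} (F : Mbar T Z ⟶ Mbar T Y) (k : T ⟶ T) (m : T ⟶ Z) :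
    F (k ≫ m) = k ≫ F m :=
  map_smul F.hom (MulOpposite.op k : (End T)ᵐᵒᵖ) m


lemma myMbarMap_comp (T : C) {X Y Z' : C} (h : X ⟶ Y) (k : Y ⟶ Z') :
    MbarMap T (h ≫ k) = MbarMap T h ≫ MbarMap T k :=
  ModuleCat.hom_ext (LinearMap.ext fun f => (Category.assoc f h k).symm)

lemma myMbarMap_id (T X : C) : MbarMap T (𝟙 X) = 𝟙 (Mbar T X) :=
  ModuleCat.hom_ext (LinearMap.ext fun f => Category.comp_id f)

/-- `Mbar` carries isomorphisms to isomorphisms. -/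
def myMbarIso (T : C) {X Y : C} (e : X ≅ Y) : Mbar T X ≅ Mbar T Y where
  hom := MbarMap T e.hom
  inv := MbarMap T e.inv
  hom_inv_id := by rw [← myMbarMap_comp, e.hom_inv_id, myMbarMap_id]
  inv_hom_id := by rw [← myMbarMap_comp, e.inv_hom_id, myMbarMap_id]

/-- Faithfulness of `Hom(T,-)` on maps out of `add T`. -/
lemma myMbar_cancel {T Z : C} (hZ : InAddC T Z) {Y : C} {h h' : Z ⟶ Y}
    (H : ∀ f : T ⟶ Z, f ≫ h = f ≫ h') : h = h' := by
  obtain ⟨n, s, p, hsp⟩ := hZ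
  have hp : p ≫ h = p ≫ h' := by
    apply biproduct.hom_ext'
    intro j
    have := H (biproduct.ι (fun _ : Fin n => T) j ≫ p)
    simpa [Category.assoc] using this
  calc h = s ≫ (p ≫ h) := by rw [← Category.assoc, hsp, Category.id_comp]
  _ = s ≫ (p ≫ h') := by rw [hp]
  _ = h' := by rw [← Category.assoc, hsp, Category.id_comp]

/-- Fullness of `Hom(T,-)` out of `add T` into anything. -/
lemma myMbar_lift {T Z : C} (hZ : InAddC T Z) {Y : C} (F : Mbar T Z ⟶ Mbar T Y) :
    ∃ h : Z ⟶ Y, ∀ f : T ⟶ Z, F f = f ≫ h := by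
  obtain ⟨n, s, p, hsp⟩ := hZ
  set G : Fin n → (T ⟶ Y) := fun i : Fin n => F (biproduct.ι (fun _ : Fin n => T) i ≫ p) with hG
  refine ⟨s ≫ biproduct.desc G, fun f => ?_⟩
  have hf : f = ((f ≫ s) ≫ p) := by rw [Category.assoc, hsp, Category.comp_id]
  have key : ∀ x : T ⟶ ⨁ (fun _ : Fin n => T), F (x ≫ p) = x ≫ biproduct.desc G := by
    intro x
    have h1 : x ≫ p = ∑ i : Fin n, (x ≫ biproduct.π (fun _ : Fin n => T) i) ≫
        (biproduct.ι (fun _ : Fin n => T) i ≫ p) := by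
      conv_lhs => rw [← Category.comp_id x, ← biproduct.total]
      rw [Preadditive.comp_sum, Preadditive.sum_comp]
      refine Finset.sum_congr rfl fun i _ => by simp [Category.assoc]
    have hxl : x = biproduct.lift (fun i : Fin n => x ≫ biproduct.π (fun _ : Fin n => T) i) := by
      ext j; simp
    have h3 : x ≫ biproduct.desc G = ∑ i : Fin n,
        (x ≫ biproduct.π (fun _ : Fin n => T) i) ≫ G i := by
      conv_lhs => rw [hxl]
      rw [biproduct.lift_desc]
    rw [h1, h3]; erw [map_sum]
    exact Finset.sum_congr rfl fun i _ => myMbar_natural F _ _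
  conv_lhs => rw [hf]
  rw [key (f ≫ s), Category.assoc]

end MyAux

section MyAux2
set_option linter.unusedSectionVars false
variable {C : Type} [Category C] [Preadditive C] [HasFiniteBiproducts C] [HasShift C ℤ]

lemma myInAdd_biprod (T : C) (n : ℕ) : InAddC T (⨁ fun _ : Fin n => T) :=
  ⟨n, 𝟙 _, 𝟙 _, by simp⟩

lemma myInAdd_self (T : C) : InAddC T T :=
  ⟨1, biproduct.lift (fun _ => 𝟙 T), biproduct.desc (fun _ => 𝟙 T), by
    rw [biproduct.lift_desc]; simp⟩

lemma myHomVanish {T : C} (hT : IsClusterTilting T) {Z Y : C} (hZ : InAddC T Z)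
    (hY : InAddC T Y) (f : Z ⟶ Y⟦(1:ℤ)⟧) : f = 0 := by
  obtain ⟨n, s, p, hsp⟩ := hZ
  have hp : p ≫ f = 0 := by
    apply biproduct.hom_ext'
    intro j
    rw [← Category.assoc, comp_zero]
    exact (hT Y).1 hY _
  calc f = s ≫ (p ≫ f) := by rw [← Category.assoc, hsp, Category.id_comp]
  _ = 0 := by rw [hp, comp_zero]

lemma myInAdd_of_iso {T : C} (hT : IsClusterTilting T) {Y Y' : C} (hY : InAddC T Y)
    (e : Y ≅ Y') : InAddC T Y' := by
  refine (hT Y').2 fun f => ?_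
  have h1 : (f ≫ e.inv⟦(1:ℤ)⟧') = 0 := (hT Y).1 hY _
  have h2 : f = f ≫ e.inv⟦(1:ℤ)⟧' ≫ e.hom⟦(1:ℤ)⟧' := by
    rw [← Functor.map_comp, e.inv_hom_id, CategoryTheory.Functor.map_id, Category.comp_id]
  rw [h2, ← Category.assoc, h1, zero_comp]

lemma myFunctorBiprodVanish {T X : C} (F : C ⥤ C) [F.Additive] (n : ℕ)
    (hX : ∀ f : T ⟶ F.obj X, f = 0) (g : T ⟶ F.obj (⨁ fun _ : Fin n => X)) : g = 0 := by
  have iso := F.mapBiproduct (fun _ : Fin n => X)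
  have h1 : g ≫ iso.hom = 0 := by
    apply biproduct.hom_ext
    intro j
    rw [Category.assoc, zero_comp]
    exact hX _
  calc g = (g ≫ iso.hom) ≫ iso.inv := by rw [Category.assoc, Iso.hom_inv_id, Category.comp_id]
  _ = 0 := by rw [h1, zero_comp]

lemma myInAdd_shift2 [∀ n : ℤ, (shiftFunctor C n).Additive] {T : C} (hT : IsClusterTilting T)
    (hS2 : InAddC T (T⟦(2:ℤ)⟧)) {Z : C} (hZ : InAddC T Z) : InAddC T (Z⟦(2:ℤ)⟧) := by
  obtain ⟨n, s, p, hsp⟩ := hZ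
  refine (hT _).2 fun f => ?_
  have hz : f ≫ (s⟦(2:ℤ)⟧')⟦(1:ℤ)⟧' = 0 := by
    refine myFunctorBiprodVanish (T := T) (X := T)
      (shiftFunctor C (2:ℤ) ⋙ shiftFunctor C (1:ℤ)) n ?_ _
    exact fun u => (hT (T⟦(2:ℤ)⟧)).1 hS2 u
  have hcomp : f = (f ≫ (s⟦(2:ℤ)⟧')⟦(1:ℤ)⟧') ≫ (p⟦(2:ℤ)⟧')⟦(1:ℤ)⟧' := by
    rw [Category.assoc, ← Functor.map_comp, ← Functor.map_comp, hsp, CategoryTheory.Functor.map_id,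
      CategoryTheory.Functor.map_id, Category.comp_id]
  rw [hcomp, hz, zero_comp]

lemma myInAdd_summand {T Y Z : C} (hY : InAddC T Y) (i : Z ⟶ Y) (q : Y ⟶ Z)
    (hiq : i ≫ q = 𝟙 Z) : InAddC T Z := by
  obtain ⟨n, s, p, hsp⟩ := hY
  exact ⟨n, i ≫ s, p ≫ q, by
    rw [Category.assoc, ← Category.assoc s, hsp, Category.id_comp, hiq]⟩

end MyAux2

section MyMain
open ZeroObject
set_option linter.unusedSectionVars false
set_option maxHeartbeats 1000000

variable {K : Type} [Field K]
variable {C : Type} [Category C] [Preadditive C] [CategoryTheory.Linear K C]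
  [HasZeroObject C] [HasShift C ℤ] [∀ n : ℤ, (shiftFunctor C n).Additive]
  [Pretriangulated C] [HasFiniteBiproducts C] [IsIdempotentComplete C]

lemma myT2mem
    (hfin : ∀ X Y : C, FiniteDimensional K (X ⟶ Y))
    (cy : ∀ X Y : C, Nonempty ((X ⟶ Y) ≃ₗ[K] Module.Dual K (Y ⟶ X⟦(2:ℤ)⟧)))
    (T : C) (hT : IsClusterTilting T)
    (hproj : Projective (Mbar T (T⟦(2:ℤ)⟧))) :
    InAddC T (T⟦(2:ℤ)⟧) := by
  classical
  haveI := hfin T (T⟦(2:ℤ)⟧)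
  set n := Module.finrank K (T ⟶ T⟦(2:ℤ)⟧) with hn
  let bb : Module.Basis (Fin n) K (T ⟶ T⟦(2:ℤ)⟧) := Module.finBasis K _
  set w' : (⨁ fun _ : Fin n => T) ⟶ T⟦(2:ℤ)⟧ := biproduct.desc (fun i => bb i) with hw'
  have hsurj : ∀ f : T ⟶ T⟦(2:ℤ)⟧, ∃ x : T ⟶ (⨁ fun _ : Fin n => T), x ≫ w' = f := by
    intro f
    refine ⟨biproduct.lift (fun i => bb.repr f i • 𝟙 T), ?_⟩
    rw [hw', biproduct.lift_desc]
    simp only [Linear.smul_comp, Category.id_comp]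
    exact bb.sum_repr f
  -- the approximation triangle of T[2]
  obtain ⟨N, fN, hN, htriN⟩ := distinguished_cocone_triangle₁ w'
  -- projective splitting of Mbar w'
  haveI hPP := hproj
  haveI hepi : Epi (MbarMap T w') := (ModuleCat.epi_iff_surjective _).2 (fun f => hsurj f)
  set j : Mbar T (T⟦(2:ℤ)⟧) ⟶ Mbar T (⨁ fun _ : Fin n => T) :=
    Projective.factorThru (𝟙 _) (MbarMap T w') with hj
  have hjw : ∀ y : T ⟶ T⟦(2:ℤ)⟧, (j y) ≫ w' = y := by
    intro y
    have h := Projective.factorThru_comp (𝟙 (Mbar T (T⟦(2:ℤ)⟧))) (MbarMap T w')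
    exact congrArg (fun F => ModuleCat.Hom.hom F y) h
  obtain ⟨e, he⟩ := myMbar_lift (myInAdd_biprod T n) (MbarMap T w' ≫ j)
  have hespec : ∀ x : T ⟶ (⨁ fun _ : Fin n => T), j (x ≫ w') = x ≫ e := by
    intro x
    have := he x
    exact this
  have hew : e ≫ w' = w' := by
    apply myMbar_cancel (myInAdd_biprod T n)
    intro x
    rw [← Category.assoc, ← hespec x, hjw]
  have hee : e ≫ e = e := by
    apply myMbar_cancel (myInAdd_biprod T n)
    intro x
    calc x ≫ (e ≫ e) = (x ≫ e) ≫ e := by rw [Category.assoc]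
    _ = x ≫ e := (hespec (x ≫ e)).symm.trans
      ((congrArg (fun z => j z) (by rw [Category.assoc, hew] : (x ≫ e) ≫ w' = x ≫ w')).trans
        (hespec x))
  obtain ⟨Z, i, q, hiq, hqi⟩ := IsIdempotentComplete.idempotents_split
    (⨁ fun _ : Fin n => T) e hee
  have hZadd : InAddC T Z := ⟨n, i, q, hiq⟩
  obtain ⟨t, ht⟩ : ∃ t' : Z ⟶ T⟦(2:ℤ)⟧, t' = i ≫ w' := ⟨_, rfl⟩
  have tsurj : ∀ f : T ⟶ T⟦(2:ℤ)⟧, ∃ y : T ⟶ Z, y ≫ t = f := by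
    intro f
    obtain ⟨jf, hjf⟩ : ∃ z : T ⟶ (⨁ fun _ : Fin n => T), z ≫ w' = f := ⟨j f, hjw f⟩
    refine ⟨jf ≫ q, ?_⟩
    rw [ht, ← Category.assoc, Category.assoc jf q i, hqi, Category.assoc, hew, hjf]
  have tinj : ∀ y : T ⟶ Z, y ≫ t = 0 → y = 0 := by
    intro y hy
    have h1 : j ((y ≫ i) ≫ w') = (y ≫ i) ≫ e := hespec (y ≫ i)
    have h2 : (y ≫ i) ≫ w' = 0 := by rw [Category.assoc, ← ht, hy]
    have h3 : (y ≫ i) ≫ e = y ≫ i := by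
      rw [← hqi, ← Category.assoc, Category.assoc y i q, hiq, Category.comp_id]
    have h4 : y ≫ i = 0 := by rw [← h3, ← h1, h2]; exact map_zero j.hom
    calc y = (y ≫ i) ≫ q := by rw [Category.assoc, hiq, Category.comp_id]
    _ = 0 := by rw [h4, zero_comp]
  -- the cone of t
  obtain ⟨Ct, u, v, htriT⟩ := distinguished_cocone_triangle t
  have homTCt : ∀ ψ : T ⟶ Ct, ψ = 0 := by
    intro ψ
    have hz : ψ ≫ (Triangle.mk t u v).mor₃ = 0 := myHomVanish hT (myInAdd_self T) hZadd _
    obtain ⟨χ, hχ⟩ := Triangle.coyoneda_exact₃ _ htriT ψ hz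
    obtain ⟨y, hy⟩ := tsurj χ
    have h0 : t ≫ u = 0 := comp_distTriang_mor_zero₁₂ _ htriT
    rw [hχ, show (Triangle.mk t u v).mor₂ = u from rfl, ← hy]
    exact (Category.assoc y t u).trans (by rw [h0, comp_zero])
  have hinv := inv_rot_of_distTriang _ htriT
  have hWadd : InAddC T (Ct⟦(-1:ℤ)⟧) := by
    refine (hT _).2 fun f => ?_
    have κ := (shiftFunctorCompIsoId C (-1:ℤ) (1:ℤ) (by norm_num)).app Ct
    have h1 : f ≫ κ.hom = 0 := homTCt _
    calc f = (f ≫ κ.hom) ≫ κ.inv := by rw [Category.assoc, Iso.hom_inv_id, Category.comp_id]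
    _ = 0 := by rw [h1, zero_comp]
  have hd0 : (Triangle.mk t u v).invRotate.mor₁ = 0 := by
    have goal : ∀ yy : T ⟶ Ct⟦(-1:ℤ)⟧,
        yy ≫ (Triangle.mk t u v).invRotate.mor₁ = yy ≫ 0 := by
      intro yy
      have h0 : (Triangle.mk t u v).invRotate.mor₁ ≫ t = 0 :=
        comp_distTriang_mor_zero₁₂ _ hinv
      have h1 : (yy ≫ (Triangle.mk t u v).invRotate.mor₁) ≫ t = 0 := by
        exact (Category.assoc _ _ _).trans ((congrArg (fun z => yy ≫ z) h0).trans comp_zero)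
      rw [tinj _ h1, comp_zero]; rfl
    exact myMbar_cancel hWadd goal
  -- dimension count
  obtain ⟨cyT2⟩ := cy T (T⟦(2:ℤ)⟧)
  obtain ⟨cyTZ⟩ := cy T Z
  haveI := hfin T Z
  haveI := hfin Z (T⟦(2:ℤ)⟧)
  haveI := hfin (T⟦(2:ℤ)⟧) (T⟦(2:ℤ)⟧)
  haveI : FiniteDimensional K (Module.Dual K (T⟦(2:ℤ)⟧ ⟶ T⟦(2:ℤ)⟧)) := inferInstance
  have hρbij : Function.Bijective (Linear.rightComp K T t) := by
    constructor
    · intro y₁ y₂ hy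
      have hsub : (y₁ - y₂) ≫ t = 0 := by
        rw [Preadditive.sub_comp]
        have : y₁ ≫ t = y₂ ≫ t := hy
        rw [this, sub_self]
      have := tinj _ hsub
      exact sub_eq_zero.1 this
    · intro f
      obtain ⟨y, hy⟩ := tsurj f
      exact ⟨y, hy⟩
  have d1 : Module.finrank K (T ⟶ T⟦(2:ℤ)⟧) = Module.finrank K (T⟦(2:ℤ)⟧ ⟶ T⟦(2:ℤ)⟧) := by
    rw [cyT2.finrank_eq]
    exact Subspace.dual_finrank_eq
  have d2 : Module.finrank K ((T : C) ⟶ Z) = Module.finrank K (T ⟶ T⟦(2:ℤ)⟧) :=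
    (LinearEquiv.ofBijective (Linear.rightComp K T t) hρbij).finrank_eq
  have d3 : Module.finrank K ((T : C) ⟶ Z) = Module.finrank K (Z ⟶ T⟦(2:ℤ)⟧) := by
    rw [cyTZ.finrank_eq]
    exact Subspace.dual_finrank_eq
  have dEnd : Module.finrank K (T⟦(2:ℤ)⟧ ⟶ T⟦(2:ℤ)⟧) = Module.finrank K (Z ⟶ T⟦(2:ℤ)⟧) := by
    omega
  -- retraction of t
  obtain ⟨r, hr⟩ : ∃ r : T⟦(2:ℤ)⟧ ⟶ Z, 𝟙 Z = t ≫ r :=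
    Triangle.yoneda_exact₂ _ hinv (𝟙 Z) (by rw [hd0]; exact zero_comp)
  have hlsurj : Function.Surjective (Linear.leftComp K (T⟦(2:ℤ)⟧) t) := by
    intro ψ'
    refine ⟨r ≫ ψ', ?_⟩
    have : t ≫ r ≫ ψ' = (t ≫ r) ≫ ψ' := by rw [Category.assoc]
    calc (Linear.leftComp K (T⟦(2:ℤ)⟧) t) (r ≫ ψ') = t ≫ r ≫ ψ' := rfl
    _ = (t ≫ r) ≫ ψ' := by rw [Category.assoc]
    _ = ψ' := by rw [← hr, Category.id_comp]
  have hlinj : Function.Injective (Linear.leftComp K (T⟦(2:ℤ)⟧) t) :=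
    (LinearMap.injective_iff_surjective_of_finrank_eq_finrank dEnd).2 hlsurj
  -- the section of u and killing Ct
  have huσ : ∀ σ : Ct ⟶ T⟦(2:ℤ)⟧, u ≫ σ = 0 := by
    intro σ
    apply hlinj
    have h0 : t ≫ u = 0 := comp_distTriang_mor_zero₁₂ _ htriT
    show t ≫ (u ≫ σ) = t ≫ 0
    rw [← Category.assoc, h0, zero_comp, comp_zero]
  have hv0 : v = 0 := by
    have h := hd0
    change -((shiftFunctor C (-1:ℤ)).map v ≫
      (shiftFunctorCompIsoId C (1:ℤ) (-1:ℤ) (by omega)).hom.app Z) = 0 at h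
    rw [neg_eq_zero] at h
    have h2 : (shiftFunctor C (-1:ℤ)).map v = 0 := by
      apply (cancel_mono ((shiftFunctorCompIsoId C (1:ℤ) (-1:ℤ) (by omega)).hom.app Z)).1
      rw [zero_comp]
      exact h
    apply (shiftFunctor C (-1:ℤ)).map_injective
    rw [h2, CategoryTheory.Functor.map_zero]
  obtain ⟨σ, hσ⟩ : ∃ σ : Ct ⟶ T⟦(2:ℤ)⟧, 𝟙 Ct = σ ≫ u := Triangle.coyoneda_exact₃ _ htriT (𝟙 Ct)
    (by rw [show (Triangle.mk t u v).mor₃ = v from rfl, hv0]; exact comp_zero)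
  have hCt : 𝟙 Ct = 0 := by
    have h1 : 𝟙 Ct = (σ ≫ u) ≫ (σ ≫ u) := by
      rw [← hσ, Category.comp_id]
    rw [h1, Category.assoc, ← Category.assoc u σ u, huσ σ, zero_comp, comp_zero]
  have hZero : IsZero Ct := (IsZero.iff_id_eq_zero Ct).2 hCt
  have hZeroW : IsZero (Ct⟦(-1:ℤ)⟧) := by
    have i1 : Ct⟦(-1:ℤ)⟧ ≅ (0:C)⟦(-1:ℤ)⟧ := (shiftFunctor C (-1:ℤ)).mapIso hZero.isoZero
    have i2 : IsZero ((0:C)⟦(-1:ℤ)⟧) :=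
      IsZero.of_iso (isZero_zero C) ((shiftFunctor C (-1:ℤ)).mapZeroObject)
    exact IsZero.of_iso i2 i1
  have htiso : IsIso t := by
    have := (Triangle.isZero₁_iff_isIso₂ _ hinv).1 hZeroW
    exact this
  exact myInAdd_of_iso hT hZadd (asIso t)

lemma myProjT2 (T : C) (ν : ModuleCat (End T)ᵐᵒᵖ ⥤ ModuleCat (End T)ᵐᵒᵖ)
    [ν.IsEquivalence] (e : ν.obj (Mbar T T) ≅ Mbar T (T⟦(2:ℤ)⟧)) :
    Projective (Mbar T (T⟦(2:ℤ)⟧)) := by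
  have h1 : Projective (ModuleCat.of (End T)ᵐᵒᵖ (End T)ᵐᵒᵖ) :=
    ModuleCat.projective_of_free (Module.Basis.singleton PUnit.{1} (End T)ᵐᵒᵖ)
  have iso0 : ModuleCat.of (End T)ᵐᵒᵖ (End T)ᵐᵒᵖ ≅ Mbar T T :=
    LinearEquiv.toModuleIso
      { toFun := fun a => a.unop
        invFun := fun f => MulOpposite.op f
        map_add' := fun a b => rfl
        map_smul' := fun a b => rfl
        left_inv := fun a => rfl
        right_inv := fun f => rfl }
  have h2 : Projective (Mbar T T) := Projective.of_iso iso0 h1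
  have h3 : Projective (ν.obj (Mbar T T)) :=
    Adjunction.map_projective ν.asEquivalence.toAdjunction _ h2
  exact Projective.of_iso e h3

end MyMain


/-- let T be cluster tilting with Λ = End(T) selfinjective, and
`T¹_M → T⁰_M → M → T¹_M[1]` a triangle with minimal right add T-approximation.
Then M ≅ M[2] iff the two-term complex `Hom(T, T_M)` is isomorphic to its image
under the Nakayama functor ν (as minimal complexes, a compatible levelwise
isomorphism). -/
theorem statement9
    (K : Type) [Field K] [IsAlgClosed K]
    (C : Type) [Category C] [Preadditive C] [CategoryTheory.Linear K C]
    [HasZeroObject C] [HasShift C ℤ] [∀ n : ℤ, (shiftFunctor C n).Additive]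
    [Pretriangulated C] [HasFiniteBiproducts C] [IsIdempotentComplete C]
    (hfin : ∀ X Y : C, FiniteDimensional K (X ⟶ Y))
    (cy : ∀ X Y : C, Nonempty ((X ⟶ Y) ≃ₗ[K] Module.Dual K (Y ⟶ X⟦(2:ℤ)⟧)))
    (T : C) (hT : IsClusterTilting T)
    (hself : Module.Injective (End T)ᵐᵒᵖ (End T)ᵐᵒᵖ)
    -- the Nakayama functor of Λ = End(T)ᵐᵒᵖ, with the canonical identification
    -- ν ∘ Hom(T,-) ≅ Hom(T, -[2]) on add T (Keller–Reiten)
    (ν : ModuleCat (End T)ᵐᵒᵖ ⥤ ModuleCat (End T)ᵐᵒᵖ) [ν.IsEquivalence] [ν.Additive]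
    (η : ∀ Z : C, InAddC T Z → (ν.obj (Mbar T Z) ≅ Mbar T (Z⟦(2:ℤ)⟧)))
    (hη : ∀ (Z W : C) (hZ : InAddC T Z) (hW : InAddC T W) (h : Z ⟶ W),
      ν.map (MbarMap T h) ≫ (η W hW).hom = (η Z hZ).hom ≫ MbarMap T (h⟦(2:ℤ)⟧'))
    (M T1 T0 : C) (hT1 : InAddC T T1) (hT0 : InAddC T T0)
    (g : T1 ⟶ T0) (w : T0 ⟶ M) (c : M ⟶ T1⟦(1:ℤ)⟧)
    (htri : Triangle.mk g w c ∈ distTriang C)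
    (happrox : ∀ Z : C, InAddC T Z → ∀ h : Z ⟶ M, ∃ h' : Z ⟶ T0, h' ≫ w = h)
    (hmin : ∀ φ : T0 ⟶ T0, φ ≫ w = w → IsIso φ) :
    Nonempty (M ≅ M⟦(2:ℤ)⟧) ↔
      ∃ (a : ν.obj (Mbar T T1) ≅ Mbar T T1) (b : ν.obj (Mbar T T0) ≅ Mbar T T0),
        ν.map (MbarMap T g) ≫ b.hom = a.hom ≫ MbarMap T g := by
  
  classical
  have hproj := myProjT2 T ν (η T (myInAdd_self T))
  have hS2 : InAddC T (T⟦(2:ℤ)⟧) := myT2mem hfin cy T hT hproj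
  have hT1' : InAddC T (T1⟦(2:ℤ)⟧) := myInAdd_shift2 hT hS2 hT1
  have hT0' : InAddC T (T0⟦(2:ℤ)⟧) := myInAdd_shift2 hT hS2 hT0
  have hnegOne : (2:ℤ).negOnePow = 1 := Int.negOnePow_even 2 ⟨1, rfl⟩
  have hD2 : Triangle.mk (g⟦(2:ℤ)⟧') (w⟦(2:ℤ)⟧')
      (c⟦(2:ℤ)⟧' ≫ (shiftFunctorComm C 1 2).hom.app T1) ∈ distTriang C := by
    refine isomorphic_distinguished _ (Triangle.shift_distinguished _ htri 2) _ ?_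
    refine Triangle.isoMk _ _ (Iso.refl _) (Iso.refl _) (Iso.refl _) ?_ ?_ ?_
    · show g⟦(2:ℤ)⟧' ≫ 𝟙 (T0⟦(2:ℤ)⟧) = 𝟙 (T1⟦(2:ℤ)⟧) ≫ ((2:ℤ).negOnePow • g⟦(2:ℤ)⟧')
      simp [hnegOne]
    · show w⟦(2:ℤ)⟧' ≫ 𝟙 (M⟦(2:ℤ)⟧) = 𝟙 (T0⟦(2:ℤ)⟧) ≫ ((2:ℤ).negOnePow • w⟦(2:ℤ)⟧')
      simp [hnegOne]
    · show (c⟦(2:ℤ)⟧' ≫ (shiftFunctorComm C 1 2).hom.app T1) ≫ (𝟙 (T1⟦(2:ℤ)⟧))⟦(1:ℤ)⟧' =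
        𝟙 (M⟦(2:ℤ)⟧) ≫ ((2:ℤ).negOnePow • c⟦(2:ℤ)⟧' ≫ (shiftFunctorComm C 1 2).hom.app T1)
      simp [hnegOne]
  constructor
  · rintro ⟨φ⟩
    have approx2 : ∀ (Z' : C), InAddC T Z' → ∀ h : Z' ⟶ M⟦(2:ℤ)⟧,
        ∃ h' : Z' ⟶ T0⟦(2:ℤ)⟧, h' ≫ w⟦(2:ℤ)⟧' = h := by
      intro Z' hZ' h
      have hz : h ≫ (Triangle.mk (g⟦(2:ℤ)⟧') (w⟦(2:ℤ)⟧')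
          (c⟦(2:ℤ)⟧' ≫ (shiftFunctorComm C 1 2).hom.app T1)).mor₃ = 0 :=
        myHomVanish hT hZ' hT1' _
      obtain ⟨h', hh'⟩ := Triangle.coyoneda_exact₃ _ hD2 h hz
      exact ⟨h', hh'.symm⟩
    have min2 : ∀ ψ : T0⟦(2:ℤ)⟧ ⟶ T0⟦(2:ℤ)⟧, ψ ≫ w⟦(2:ℤ)⟧' = w⟦(2:ℤ)⟧' → IsIso ψ := by
      intro ψ hψ
      obtain ⟨χ, hχ⟩ : ∃ χ : T0 ⟶ T0, χ⟦(2:ℤ)⟧' = ψ :=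
        ⟨(shiftFunctor C (2:ℤ)).preimage ψ, (shiftFunctor C (2:ℤ)).map_preimage ψ⟩
      have hχw : χ ≫ w = w := by
        apply (shiftFunctor C (2:ℤ)).map_injective
        rw [Functor.map_comp, hχ, hψ]
      have : IsIso χ := hmin χ hχw
      rw [← hχ]
      infer_instance
    have approxφ : ∀ (Z' : C), InAddC T Z' → ∀ h : Z' ⟶ M⟦(2:ℤ)⟧,
        ∃ h' : Z' ⟶ T0, h' ≫ (w ≫ φ.hom) = h := by
      intro Z' hZ' h
      obtain ⟨h', hh'⟩ := happrox Z' hZ' (h ≫ φ.inv)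
      refine ⟨h', ?_⟩
      rw [← Category.assoc, hh', Category.assoc, Iso.inv_hom_id, Category.comp_id]
    have minφ : ∀ ψ : T0 ⟶ T0, ψ ≫ (w ≫ φ.hom) = w ≫ φ.hom → IsIso ψ := by
      intro ψ hψ
      apply hmin
      have h2 := congrArg (fun z => z ≫ φ.inv) hψ
      simpa [Category.assoc] using h2
    obtain ⟨u0, hu0⟩ := approx2 T0 hT0 (w ≫ φ.hom)
    obtain ⟨v0, hv0⟩ := approxφ (T0⟦(2:ℤ)⟧) hT0' (w⟦(2:ℤ)⟧')
    have hiso1 : IsIso (u0 ≫ v0) := minφ _ (by rw [Category.assoc, hv0, hu0])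
    have hiso2 : IsIso (v0 ≫ u0) := min2 _ (by rw [Category.assoc, hu0, hv0])
    have h1 : u0 ≫ (v0 ≫ inv (u0 ≫ v0)) = 𝟙 T0 := by
      rw [← Category.assoc, IsIso.hom_inv_id]
    have hisou0 : IsIso u0 := by
      refine ⟨⟨v0 ≫ inv (u0 ≫ v0), h1, ?_⟩⟩
      have e1 : (v0 ≫ inv (u0 ≫ v0)) ≫ u0 =
          inv (v0 ≫ u0) ≫ ((v0 ≫ u0) ≫ ((v0 ≫ inv (u0 ≫ v0)) ≫ u0)) := by
        rw [← Category.assoc, IsIso.inv_hom_id, Category.id_comp]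
      have e2 : (v0 ≫ u0) ≫ ((v0 ≫ inv (u0 ≫ v0)) ≫ u0) =
          v0 ≫ (u0 ≫ (v0 ≫ inv (u0 ≫ v0))) ≫ u0 := by
        simp only [Category.assoc]
      rw [e1, e2, h1, Category.id_comp, IsIso.inv_hom_id]
    have hDphi : Triangle.mk g (w ≫ φ.hom) (φ.inv ≫ c) ∈ distTriang C := by
      refine isomorphic_distinguished _ htri _ ?_
      refine Triangle.isoMk _ _ (Iso.refl _) (Iso.refl _) φ.symm ?_ ?_ ?_
      · show g ≫ 𝟙 T0 = 𝟙 T1 ≫ g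
        simp
      · show (w ≫ φ.hom) ≫ φ.inv = 𝟙 T0 ≫ w
        simp
      · show (φ.inv ≫ c) ≫ (𝟙 T1)⟦(1:ℤ)⟧' = φ.inv ≫ c
        simp
    obtain ⟨u1, hu1, hu1'⟩ := complete_distinguished_triangle_morphism₁
      (Triangle.mk g (w ≫ φ.hom) (φ.inv ≫ c))
      (Triangle.mk (g⟦(2:ℤ)⟧') (w⟦(2:ℤ)⟧')
        (c⟦(2:ℤ)⟧' ≫ (shiftFunctorComm C 1 2).hom.app T1))
      hDphi hD2 u0 (𝟙 _) (by show (w ≫ φ.hom) ≫ 𝟙 _ = u0 ≫ w⟦(2:ℤ)⟧'; rw [Category.comp_id, hu0])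
    obtain ⟨u1, rfl⟩ : ∃ x : T1 ⟶ T1⟦(2:ℤ)⟧, x = u1 := ⟨u1, rfl⟩
    have hisou1 : IsIso u1 :=
      isIso₁_of_isIso₂₃
        (T := Triangle.mk g (w ≫ φ.hom) (φ.inv ≫ c))
        (T' := Triangle.mk (g⟦(2:ℤ)⟧') (w⟦(2:ℤ)⟧')
          (c⟦(2:ℤ)⟧' ≫ (shiftFunctorComm C 1 2).hom.app T1))
        { hom₁ := u1
          hom₂ := u0
          hom₃ := 𝟙 _
          comm₁ := hu1
          comm₂ := by show (w ≫ φ.hom) ≫ 𝟙 _ = u0 ≫ w⟦(2:ℤ)⟧'; rw [Category.comp_id, hu0]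
          comm₃ := hu1' }
        hDphi hD2 hisou0 (by show IsIso (𝟙 (M⟦(2:ℤ)⟧)); infer_instance)
    refine ⟨η T1 hT1 ≪≫ (myMbarIso T (asIso u1)).symm,
      η T0 hT0 ≪≫ (myMbarIso T (asIso u0)).symm, ?_⟩
    have hu1c : g ≫ u0 = u1 ≫ g⟦(2:ℤ)⟧' := hu1
    have hcomm : g⟦(2:ℤ)⟧' ≫ inv u0 = inv u1 ≫ g := by
      have h' : inv u1 ≫ ((u1 ≫ g⟦(2:ℤ)⟧') ≫ inv u0) = g⟦(2:ℤ)⟧' ≫ inv u0 := by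
        rw [← Category.assoc, ← Category.assoc, IsIso.inv_hom_id, Category.id_comp]
      rw [← h', ← hu1c]
      simp only [Category.assoc, IsIso.hom_inv_id, Category.comp_id]
    show ν.map (MbarMap T g) ≫ ((η T0 hT0).hom ≫ MbarMap T (inv u0)) =
      ((η T1 hT1).hom ≫ MbarMap T (inv u1)) ≫ MbarMap T g
    calc ν.map (MbarMap T g) ≫ ((η T0 hT0).hom ≫ MbarMap T (inv u0))
        = (ν.map (MbarMap T g) ≫ (η T0 hT0).hom) ≫ MbarMap T (inv u0) := by
          rw [Category.assoc]
      _ = ((η T1 hT1).hom ≫ MbarMap T (g⟦(2:ℤ)⟧')) ≫ MbarMap T (inv u0) := by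
          rw [hη T1 T0 hT1 hT0 g]
      _ = (η T1 hT1).hom ≫ MbarMap T (g⟦(2:ℤ)⟧' ≫ inv u0) := by
          rw [Category.assoc, myMbarMap_comp]
      _ = (η T1 hT1).hom ≫ MbarMap T (inv u1 ≫ g) := by rw [hcomm]
      _ = ((η T1 hT1).hom ≫ MbarMap T (inv u1)) ≫ MbarMap T g := by
          rw [myMbarMap_comp, Category.assoc]
  · rintro ⟨a, b, hab⟩
    have square : MbarMap T (g⟦(2:ℤ)⟧') ≫ ((η T0 hT0).inv ≫ b.hom) =
        ((η T1 hT1).inv ≫ a.hom) ≫ MbarMap T g := by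
      have h2 : (η T1 hT1).inv ≫ ν.map (MbarMap T g) ≫ (η T0 hT0).hom =
          MbarMap T (g⟦(2:ℤ)⟧') := by
        rw [hη T1 T0 hT1 hT0 g, Iso.inv_hom_id_assoc]
      rw [← h2]
      simp only [Category.assoc, Iso.hom_inv_id_assoc]
      rw [hab]
    obtain ⟨uu, huu⟩ := myMbar_lift hT1' ((η T1 hT1).inv ≫ a.hom)
    obtain ⟨uu', huu'⟩ := myMbar_lift hT1 (a.inv ≫ (η T1 hT1).hom)
    obtain ⟨vv, hvv⟩ := myMbar_lift hT0' ((η T0 hT0).inv ≫ b.hom)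
    obtain ⟨vv', hvv'⟩ := myMbar_lift hT0 (b.inv ≫ (η T0 hT0).hom)
    have hIdT1' : ∀ f : T ⟶ T1⟦(2:ℤ)⟧, f ≫ uu ≫ uu' = f := by
      intro f
      have e1 : f ≫ uu ≫ uu' = (a.inv ≫ (η T1 hT1).hom) (((η T1 hT1).inv ≫ a.hom) f) := by
        rw [← Category.assoc, ← huu f]; exact (huu' _).symm
      have e3 : ((η T1 hT1).inv ≫ a.hom) ≫ (a.inv ≫ (η T1 hT1).hom) = 𝟙 _ := by
        simp only [Category.assoc, Iso.hom_inv_id_assoc, Iso.inv_hom_id]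
      rw [e1, show (a.inv ≫ (η T1 hT1).hom) (((η T1 hT1).inv ≫ a.hom) f) =
        (((η T1 hT1).inv ≫ a.hom) ≫ (a.inv ≫ (η T1 hT1).hom)) f from rfl, e3]
      rfl
    have hIdT1 : ∀ f : T ⟶ T1, f ≫ uu' ≫ uu = f := by
      intro f
      have e1 : f ≫ uu' ≫ uu = ((η T1 hT1).inv ≫ a.hom) ((a.inv ≫ (η T1 hT1).hom) f) := by
        rw [← Category.assoc, ← huu' f]; exact (huu _).symm
      have e3 : (a.inv ≫ (η T1 hT1).hom) ≫ ((η T1 hT1).inv ≫ a.hom) = 𝟙 _ := by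
        simp only [Category.assoc, Iso.hom_inv_id_assoc, Iso.inv_hom_id]
      rw [e1, show ((η T1 hT1).inv ≫ a.hom) ((a.inv ≫ (η T1 hT1).hom) f) =
        ((a.inv ≫ (η T1 hT1).hom) ≫ ((η T1 hT1).inv ≫ a.hom)) f from rfl, e3]
      rfl
    have hIdT0' : ∀ f : T ⟶ T0⟦(2:ℤ)⟧, f ≫ vv ≫ vv' = f := by
      intro f
      have e1 : f ≫ vv ≫ vv' = (b.inv ≫ (η T0 hT0).hom) (((η T0 hT0).inv ≫ b.hom) f) := by
        rw [← Category.assoc, ← hvv f]; exact (hvv' _).symm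
      have e3 : ((η T0 hT0).inv ≫ b.hom) ≫ (b.inv ≫ (η T0 hT0).hom) = 𝟙 _ := by
        simp only [Category.assoc, Iso.hom_inv_id_assoc, Iso.inv_hom_id]
      rw [e1, show (b.inv ≫ (η T0 hT0).hom) (((η T0 hT0).inv ≫ b.hom) f) =
        (((η T0 hT0).inv ≫ b.hom) ≫ (b.inv ≫ (η T0 hT0).hom)) f from rfl, e3]
      rfl
    have hIdT0 : ∀ f : T ⟶ T0, f ≫ vv' ≫ vv = f := by
      intro f
      have e1 : f ≫ vv' ≫ vv = ((η T0 hT0).inv ≫ b.hom) ((b.inv ≫ (η T0 hT0).hom) f) := by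
        rw [← Category.assoc, ← hvv' f]; exact (hvv _).symm
      have e3 : (b.inv ≫ (η T0 hT0).hom) ≫ ((η T0 hT0).inv ≫ b.hom) = 𝟙 _ := by
        simp only [Category.assoc, Iso.hom_inv_id_assoc, Iso.inv_hom_id]
      rw [e1, show ((η T0 hT0).inv ≫ b.hom) ((b.inv ≫ (η T0 hT0).hom) f) =
        ((b.inv ≫ (η T0 hT0).hom) ≫ ((η T0 hT0).inv ≫ b.hom)) f from rfl, e3]
      rfl
    have huuiso : IsIso uu := by
      refine ⟨⟨uu', ?_, ?_⟩⟩
      · apply myMbar_cancel hT1'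
        intro f
        rw [Category.comp_id]
        exact hIdT1' f
      · apply myMbar_cancel hT1
        intro f
        rw [Category.comp_id]
        exact hIdT1 f
    have hvviso : IsIso vv := by
      refine ⟨⟨vv', ?_, ?_⟩⟩
      · apply myMbar_cancel hT0'
        intro f
        rw [Category.comp_id]
        exact hIdT0' f
      · apply myMbar_cancel hT0
        intro f
        rw [Category.comp_id]
        exact hIdT0 f
    have hsq : g⟦(2:ℤ)⟧' ≫ vv = uu ≫ g := by
      apply myMbar_cancel hT1'
      intro f
      calc f ≫ g⟦(2:ℤ)⟧' ≫ vv = (f ≫ g⟦(2:ℤ)⟧') ≫ vv := by rw [Category.assoc]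
      _ = f ≫ uu ≫ g := (hvv _).symm.trans
        ((congrArg (fun F => ModuleCat.Hom.hom F f) square).trans
          ((congrArg (fun x : T ⟶ T1 => x ≫ g) (huu f)).trans (Category.assoc _ _ _)))
    obtain ⟨m, hm1, hm2⟩ := complete_distinguished_triangle_morphism
      (Triangle.mk (g⟦(2:ℤ)⟧') (w⟦(2:ℤ)⟧')
        (c⟦(2:ℤ)⟧' ≫ (shiftFunctorComm C 1 2).hom.app T1))
      (Triangle.mk g w c) hD2 htri uu vv hsq
    have hmiso : IsIso m :=
      isIso₃_of_isIso₁₂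
        (T := Triangle.mk (g⟦(2:ℤ)⟧') (w⟦(2:ℤ)⟧')
          (c⟦(2:ℤ)⟧' ≫ (shiftFunctorComm C 1 2).hom.app T1))
        (T' := Triangle.mk g w c)
        { hom₁ := uu
          hom₂ := vv
          hom₃ := m
          comm₁ := hsq
          comm₂ := hm1
          comm₃ := hm2 }
        hD2 htri huuiso hvviso
    exact ⟨(asIso m).symm⟩
end
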